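/- arXiv:1401.6371 — 4 statements merged into one kernel-verified Lean document; each statement's English description precedes it below -/
import Mathlib

section
/- Let A and B be symmetric positive definite k×k matrices and Λ a non-empty subset of ℝ^{k×d} not containing the zero matrix. Define δ_Λ(A|B) = sup_{λ∈Λ} |1 − tr(λᵀAλ)/tr(λᵀBλ)| and δ_Λ(A,B) = max{δ_Λ(A|B), δ_Λ(B|A)}. Then δ_Λ(A,B) ≤ ⦀AB^{−1} − BA^{−1}⦀, where ⦀·⦀ is the operator norm. -/
open Matrix
open scoped Matrix.Norms.L2Operator MatrixOrder

lemma symm_dot_swap {k : ℕ} (P : Matrix (Fin k) (Fin k) ℝ) (hP : P.IsHermitian) (x w : Fin k → ℝ) :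
    x ⬝ᵥ P *ᵥ w = (P *ᵥ x) ⬝ᵥ w := by
  rw [dotProduct_mulVec, ← mulVec_transpose, ← conjTranspose_eq_transpose_of_trivial, hP.eq]

lemma key {k : ℕ} (A B : Matrix (Fin k) (Fin k) ℝ) (hA : A.PosDef) (hB : B.PosDef)
    (x : Fin k → ℝ) :
    x ⬝ᵥ A *ᵥ x - x ⬝ᵥ B *ᵥ x ≤ ‖A * B⁻¹ - B * A⁻¹‖ * (x ⬝ᵥ B *ᵥ x) := by
  rcases isEmpty_or_nonempty (Fin k) with hk | hk
  · simp [dotProduct, Finset.univ_eq_empty]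
  set S := CFC.sqrt B with hSdef
  have hS : S.PosSemidef := (CFC.sqrt_nonneg B).posSemidef
  have hSS : S * S = B := CFC.sqrt_mul_sqrt_self B hB.posSemidef.nonneg
  have hdetS : IsUnit S.det := by
    have h1 : S.det * S.det = B.det := by rw [← det_mul, hSS]
    have h2 : S.det ≠ 0 := by
      intro h; rw [h, mul_zero] at h1; exact hB.det_pos.ne (by rw [h1])
    exact h2.isUnit
  have hdetA : IsUnit A.det := hA.det_pos.ne'.isUnit
  have hSinv : S⁻¹ * S = 1 := nonsing_inv_mul S hdetS
  have hSinv' : S * S⁻¹ = 1 := mul_nonsing_inv S hdetS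
  have hAinv : A * A⁻¹ = 1 := mul_nonsing_inv A hdetA
  have hAinv' : A⁻¹ * A = 1 := nonsing_inv_mul A hdetA
  have hSH : S⁻¹.IsHermitian := hS.isHermitian.inv
  -- M = S⁻¹ A S⁻¹
  set M : Matrix (Fin k) (Fin k) ℝ := S⁻¹ * A * S⁻¹ with hMdef
  have hSinj : ∀ y : Fin k → ℝ, S⁻¹ *ᵥ y = 0 → y = 0 := by
    intro y hy
    have : S *ᵥ (S⁻¹ *ᵥ y) = y := by rw [mulVec_mulVec, hSinv', one_mulVec]
    rw [hy, mulVec_zero] at this; exact this.symm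
  have hMpd : M.PosDef := by
    refine PosDef.of_dotProduct_mulVec_pos ?_ ?_
    · show Mᴴ = M
      simp only [hMdef, conjTranspose_mul, hSH.eq, hA.isHermitian.eq, mul_assoc]
    · intro y hy
      have h1 : star y ⬝ᵥ M *ᵥ y = (S⁻¹ *ᵥ y) ⬝ᵥ A *ᵥ (S⁻¹ *ᵥ y) := by
        simp only [star_trivial, hMdef, ← mulVec_mulVec]
        rw [symm_dot_swap _ hSH]
      rw [h1]
      have := hA.dotProduct_mulVec_pos (fun h => hy (hSinj y h))
      simpa using this
  have hM : M.IsHermitian := hMpd.isHermitian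
  -- eigenvalues
  obtain ⟨i0, -, hi0⟩ := Finset.exists_max_image Finset.univ hM.eigenvalues
    ⟨Classical.arbitrary _, Finset.mem_univ _⟩
  set μ := hM.eigenvalues i0 with hμdef
  have hμpos : 0 < μ := hMpd.eigenvalues_pos i0
  -- Rayleigh bound
  have rayleigh : ∀ y : Fin k → ℝ, y ⬝ᵥ M *ᵥ y ≤ μ * (y ⬝ᵥ y) := by
    intro y
    set U : Matrix (Fin k) (Fin k) ℝ := (hM.eigenvectorUnitary : Matrix (Fin k) (Fin k) ℝ) with hUdef
    have hUU : U * star U = 1 := mem_unitaryGroup_iff.mp hM.eigenvectorUnitary.2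
    set z : Fin k → ℝ := star U *ᵥ y with hzdef
    have h1 : y ⬝ᵥ M *ᵥ y = ∑ i, hM.eigenvalues i * (z i)^2 := by
      conv_lhs => rw [hM.spectral_theorem, Unitary.conjStarAlgAut_apply]
      rw [← mulVec_mulVec, ← mulVec_mulVec, dotProduct_mulVec, ← mulVec_transpose,
        ← conjTranspose_eq_transpose_of_trivial, ← star_eq_conjTranspose, ← hUdef, ← hzdef]
      simp [dotProduct, mulVec_diagonal, Function.comp, RCLike.ofReal_real_eq_id, sq,
        mul_comm, mul_assoc, mul_left_comm]
    have h2 : y ⬝ᵥ y = ∑ i, (z i)^2 := by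
      have : z ⬝ᵥ z = y ⬝ᵥ y := by
        rw [hzdef, dotProduct_mulVec, ← mulVec_transpose, ← conjTranspose_eq_transpose_of_trivial,
          ← star_eq_conjTranspose, star_star, mulVec_mulVec, hUU, one_mulVec]
      rw [← this]; simp [dotProduct, sq]
    rw [h1, h2, Finset.mul_sum]
    apply Finset.sum_le_sum
    intro i _
    have := hi0 i (Finset.mem_univ i)
    nlinarith [sq_nonneg (z i)]
  -- eigenvector of C := A * B⁻¹ - B * A⁻¹
  set C : Matrix (Fin k) (Fin k) ℝ := A * B⁻¹ - B * A⁻¹ with hCdef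
  have hμC : μ - μ⁻¹ ≤ ‖C‖ := by
    set v : Fin k → ℝ := ⇑(hM.eigenvectorBasis i0) with hvdef
    have hMv : M *ᵥ v = μ • v := hM.mulVec_eigenvectorBasis i0
    have hvne : v ≠ 0 := by
      intro hv0
      have h1 : ‖hM.eigenvectorBasis i0‖ = 1 := hM.eigenvectorBasis.orthonormal.1 i0
      have h2 : ‖hM.eigenvectorBasis i0‖ = 0 := by
        rw [EuclideanSpace.norm_eq]
        simp only [show ∀ i, (hM.eigenvectorBasis i0) i = 0 from fun i => congrFun hv0 i]
        simp
      rw [h2] at h1; norm_num at h1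
    set u : Fin k → ℝ := S *ᵥ v with hudef
    have hune : u ≠ 0 := by
      intro h
      apply hvne
      have : S⁻¹ *ᵥ (S *ᵥ v) = v := by rw [mulVec_mulVec, hSinv, one_mulVec]
      rw [← this, ← hudef, h, mulVec_zero]
    have hBinv : B⁻¹ = S⁻¹ * S⁻¹ := by rw [← hSS, Matrix.mul_inv_rev]
    have hASv : A *ᵥ (S⁻¹ *ᵥ v) = μ • u := by
      have h1 : A *ᵥ (S⁻¹ *ᵥ v) = S *ᵥ (M *ᵥ v) := by
        rw [mulVec_mulVec, mulVec_mulVec, hMdef, ← mul_assoc, ← mul_assoc, hSinv', one_mul]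
      rw [h1, hMv, mulVec_smul]
    have eBu : B⁻¹ *ᵥ u = S⁻¹ *ᵥ v := by
      rw [hudef, hBinv, mulVec_mulVec, mul_assoc, hSinv, mul_one]
    have h_u1 : (A * B⁻¹) *ᵥ u = μ • u := by
      rw [← mulVec_mulVec, eBu, hASv]
    have h_u2 : (B * A⁻¹) *ᵥ u = μ⁻¹ • u := by
      have hAu : A *ᵥ (μ⁻¹ • (S⁻¹ *ᵥ v)) = u := by
        rw [mulVec_smul, hASv, smul_smul, inv_mul_cancel₀ hμpos.ne', one_smul]
      have hAinvu : A⁻¹ *ᵥ u = μ⁻¹ • (S⁻¹ *ᵥ v) := by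
        rw [← hAu, mulVec_mulVec, hAinv', one_mulVec]
      rw [← mulVec_mulVec, hAinvu, mulVec_smul, ← hSS, mulVec_mulVec, mul_assoc, hSinv',
        mul_one]
    have hCu : C *ᵥ u = (μ - μ⁻¹) • u := by
      rw [hCdef, sub_mulVec, h_u1, h_u2, sub_smul]
    have hle := C.l2_opNorm_mulVec (WithLp.toLp 2 u)
    rw [WithLp.ofLp_toLp, hCu, _root_.map_smul, norm_smul, Real.norm_eq_abs] at hle
    have hEq : (EuclideanSpace.equiv (Fin k) ℝ).symm u = WithLp.toLp 2 u := rfl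
    rw [← hEq] at hle
    have hupos : 0 < ‖(EuclideanSpace.equiv (Fin k) ℝ).symm u‖ := by
      rw [norm_pos_iff]
      intro h
      exact hune (by rw [hEq] at h; exact congrArg WithLp.ofLp h)
    have habs : |μ - μ⁻¹| ≤ ‖C‖ := le_of_mul_le_mul_right hle hupos
    exact (le_abs_self _).trans habs
  -- conclude
  have e2 : (S *ᵥ x) ⬝ᵥ (S *ᵥ x) = x ⬝ᵥ B *ᵥ x := by
    rw [← symm_dot_swap S hS.isHermitian, mulVec_mulVec, hSS]
  have hMS : M *ᵥ (S *ᵥ x) = S⁻¹ *ᵥ (A *ᵥ x) := by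
    rw [mulVec_mulVec, hMdef, mul_assoc, hSinv, mul_one, ← mulVec_mulVec]
  have e1 : x ⬝ᵥ A *ᵥ x = (S *ᵥ x) ⬝ᵥ M *ᵥ (S *ᵥ x) := by
    rw [hMS, symm_dot_swap S⁻¹ hSH (S *ᵥ x) (A *ᵥ x), mulVec_mulVec, hSinv, one_mulVec]
  have hxA : x ⬝ᵥ A *ᵥ x ≤ μ * (x ⬝ᵥ B *ᵥ x) := by
    rw [e1, ← e2]
    exact rayleigh (S *ᵥ x)
  have hBnn : 0 ≤ x ⬝ᵥ B *ᵥ x := by simpa using hB.posSemidef.dotProduct_mulVec_nonneg x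
  have hμ1 : μ - 1 ≤ ‖C‖ := by
    rcases le_or_gt 1 μ with h | h
    · have : μ⁻¹ ≤ 1 := by
        rw [inv_le_one_iff₀]; right; exact h
      linarith
    · linarith [norm_nonneg C]
  nlinarith [norm_nonneg C]

lemma trace_form {k d : ℕ} (M : Matrix (Fin k) (Fin k) ℝ) (lam : Matrix (Fin k) (Fin d) ℝ) :
    (lamᵀ * M * lam).trace = ∑ j, (fun i => lam i j) ⬝ᵥ M *ᵥ (fun i => lam i j) := by
  simp only [Matrix.trace, Matrix.diag, mul_apply, transpose_apply, dotProduct, mulVec,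
    Finset.sum_mul, Finset.mul_sum]
  refine Finset.sum_congr rfl fun j _ => ?_
  rw [Finset.sum_comm]
  exact Finset.sum_congr rfl fun i _ => Finset.sum_congr rfl fun i' _ => by ring

theorem stmt_5 {k d : ℕ} (A B : Matrix (Fin k) (Fin k) ℝ)
    (hA : A.PosDef) (hB : B.PosDef)
    (Λ : Set (Matrix (Fin k) (Fin d) ℝ)) (hne : Λ.Nonempty) (h0 : 0 ∉ Λ) :
    ∀ lam ∈ Λ,
      |1 - (lamᵀ * A * lam).trace / (lamᵀ * B * lam).trace| ≤ ‖A * B⁻¹ - B * A⁻¹‖ ∧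
      |1 - (lamᵀ * B * lam).trace / (lamᵀ * A * lam).trace| ≤ ‖A * B⁻¹ - B * A⁻¹‖ := by
  intro lam hlam
  have hlamne : lam ≠ 0 := fun h => h0 (h ▸ hlam)
  set c := ‖A * B⁻¹ - B * A⁻¹‖ with hcdef
  have hcnn : 0 ≤ c := norm_nonneg _
  set a := (lamᵀ * A * lam).trace with hadef
  set b := (lamᵀ * B * lam).trace with hbdef
  have ha : a = ∑ j, (fun i => lam i j) ⬝ᵥ A *ᵥ (fun i => lam i j) := trace_form A lam
  have hb : b = ∑ j, (fun i => lam i j) ⬝ᵥ B *ᵥ (fun i => lam i j) := trace_form B lam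
  obtain ⟨j0, hj0⟩ : ∃ j, (fun i => lam i j) ≠ 0 := by
    by_contra h
    push_neg at h
    exact hlamne (by ext i j; exact congrFun (h j) i)
  have hbpos : 0 < b := by
    rw [hb]
    refine Finset.sum_pos' (fun j _ => by simpa using hB.posSemidef.dotProduct_mulVec_nonneg (fun i => lam i j))
      ⟨j0, Finset.mem_univ _, by simpa using hB.dotProduct_mulVec_pos hj0⟩
  have hapos : 0 < a := by
    rw [ha]
    refine Finset.sum_pos' (fun j _ => by simpa using hA.posSemidef.dotProduct_mulVec_nonneg (fun i => lam i j))
      ⟨j0, Finset.mem_univ _, by simpa using hA.dotProduct_mulVec_pos hj0⟩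
  have hab : a - b ≤ c * b := by
    rw [ha, hb, ← Finset.sum_sub_distrib, Finset.mul_sum]
    exact Finset.sum_le_sum fun j _ => key A B hA hB (fun i => lam i j)
  have hba : b - a ≤ c * a := by
    have hc' : ‖B * A⁻¹ - A * B⁻¹‖ = c := by rw [hcdef, ← norm_neg, neg_sub]
    rw [ha, hb, ← Finset.sum_sub_distrib, Finset.mul_sum]
    refine Finset.sum_le_sum fun j _ => ?_
    have := key B A hB hA (fun i => lam i j)
    rwa [hc'] at this
  have hba' : b - a ≤ c * b := by
    rcases le_total a b with h | h
    · nlinarith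
    · nlinarith
  have hab' : a - b ≤ c * a := by
    rcases le_total a b with h | h
    · nlinarith
    · nlinarith
  have key1 : ∀ p q : ℝ, 0 < q → p - q ≤ c * q → q - p ≤ c * q → |1 - p / q| ≤ c := by
    intro p q hq h1 h2
    rw [abs_le]
    constructor
    · have h3 : (p - q) / q ≤ c := by rw [div_le_iff₀ hq]; linarith
      have e : p / q - 1 = (p - q) / q := by field_simp
      linarith [e ▸ h3]
    · have h3 : (q - p) / q ≤ c := by rw [div_le_iff₀ hq]; linarith
      have e : 1 - p / q = (q - p) / q := by field_simp
      linarith [e ▸ h3]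
  exact ⟨key1 a b hbpos hab hba', key1 b a hapos hba hab'⟩
end

section
/- Let A, B be symmetric positive definite k×k matrices and λ ∈ ℝ^{k×d} nonzero. Then |tr(λᵀ(B−A)λ)| ≤ ⦀I − B^{−1/2} A B^{−1/2}⦀ · tr(λᵀBλ). -/
open Matrix

open scoped Matrix.Norms.L2Operator

namespace Matrix.PosSemidef

open scoped ComplexOrder

/-- The positive semidefinite square root of a positive semidefinite matrix
(the definition Mathlib had in December 2024, since removed). -/
noncomputable def sqrt {n : Type*} [Fintype n] [DecidableEq n] {𝕜 : Type*} [RCLike 𝕜]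
    {A : Matrix n n 𝕜} (hA : A.PosSemidef) : Matrix n n 𝕜 :=
  hA.1.eigenvectorUnitary.1 * diagonal ((↑) ∘ (√·) ∘ hA.1.eigenvalues) *
  (star hA.1.eigenvectorUnitary : Matrix n n 𝕜)

end Matrix.PosSemidef

lemma sqrt_transpose_real {k : ℕ} {B : Matrix (Fin k) (Fin k) ℝ} (hB : B.PosSemidef) :
    (hB.sqrt)ᵀ = hB.sqrt := by
  rw [← Matrix.conjTranspose_eq_transpose_of_trivial]
  simp only [Matrix.PosSemidef.sqrt, Matrix.conjTranspose_mul, Matrix.star_eq_conjTranspose,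
    Matrix.conjTranspose_conjTranspose, Matrix.diagonal_conjTranspose]
  simp only [star_trivial, Matrix.mul_assoc]

lemma sqrt_mul_self_real {k : ℕ} {B : Matrix (Fin k) (Fin k) ℝ} (hB : B.PosSemidef) :
    hB.sqrt * hB.sqrt = B := by
  have hU : (star hB.1.eigenvectorUnitary : Matrix (Fin k) (Fin k) ℝ) *
      hB.1.eigenvectorUnitary.1 = 1 := Unitary.coe_star_mul_self _
  have hD : diagonal (RCLike.ofReal ∘ (√·) ∘ hB.1.eigenvalues : Fin k → ℝ) *
      diagonal (RCLike.ofReal ∘ (√·) ∘ hB.1.eigenvalues : Fin k → ℝ) =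
      diagonal (RCLike.ofReal ∘ hB.1.eigenvalues : Fin k → ℝ) := by
    rw [Matrix.diagonal_mul_diagonal]
    congr 1
    funext i
    simp [Real.mul_self_sqrt (hB.eigenvalues_nonneg i)]
  conv_rhs => rw [hB.1.spectral_theorem, Unitary.conjStarAlgAut_apply]
  simp only [Matrix.PosSemidef.sqrt]
  calc _ = hB.1.eigenvectorUnitary.1 * diagonal (RCLike.ofReal ∘ (√·) ∘ hB.1.eigenvalues : Fin k → ℝ) *
      ((star hB.1.eigenvectorUnitary : Matrix (Fin k) (Fin k) ℝ) *
      hB.1.eigenvectorUnitary.1) * diagonal (RCLike.ofReal ∘ (√·) ∘ hB.1.eigenvalues : Fin k → ℝ) *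
      (star hB.1.eigenvectorUnitary : Matrix (Fin k) (Fin k) ℝ) := by
        simp only [Matrix.mul_assoc]
    _ = _ := by
        rw [hU, Matrix.mul_one, Matrix.mul_assoc _ (diagonal _) (diagonal _), hD]

lemma point_ineq {k : ℕ} (N : Matrix (Fin k) (Fin k) ℝ) (x : Fin k → ℝ) :
    |x ⬝ᵥ (N *ᵥ x)| ≤ ‖N‖ * (x ⬝ᵥ x) := by
  set y : EuclideanSpace ℝ (Fin k) := (WithLp.equiv 2 _).symm x with hy
  set z : EuclideanSpace ℝ (Fin k) := (WithLp.equiv 2 _).symm (N *ᵥ x) with hz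
  have h1 : x ⬝ᵥ (N *ᵥ x) = (inner ℝ y z : ℝ) := by
    rw [PiLp.inner_apply]
    simp [dotProduct, hy, hz, WithLp.equiv_symm_apply, mul_comm]
  have h2 : x ⬝ᵥ x = ‖y‖ ^ 2 := by
    rw [← real_inner_self_eq_norm_sq, PiLp.inner_apply]
    simp [dotProduct, hy, WithLp.equiv_symm_apply, sq]
  have h3 : ‖z‖ ≤ ‖N‖ * ‖y‖ := N.l2_opNorm_mulVec y
  calc |x ⬝ᵥ (N *ᵥ x)| = |(inner ℝ y z : ℝ)| := by rw [h1]
    _ ≤ ‖y‖ * ‖z‖ := abs_real_inner_le_norm _ _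
    _ ≤ ‖y‖ * (‖N‖ * ‖y‖) := by
        have : (0:ℝ) ≤ ‖y‖ := norm_nonneg _
        nlinarith [norm_nonneg z]
    _ = ‖N‖ * (x ⬝ᵥ x) := by rw [h2]; ring

lemma trace_col {k d : ℕ} (mu : Matrix (Fin k) (Fin d) ℝ) (N : Matrix (Fin k) (Fin k) ℝ) :
    (muᵀ * N * mu).trace = ∑ j, (fun i => mu i j) ⬝ᵥ (N *ᵥ fun i => mu i j) := by
  simp only [Matrix.trace, Matrix.diag, Matrix.mul_apply, Matrix.transpose_apply,
    dotProduct, Matrix.mulVec, Finset.sum_mul, Finset.mul_sum]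
  refine Finset.sum_congr rfl fun j _ => ?_
  rw [Finset.sum_comm]
  exact Finset.sum_congr rfl fun a _ => Finset.sum_congr rfl fun b _ => by ring

lemma trace_ineq {k d : ℕ} (mu : Matrix (Fin k) (Fin d) ℝ) (N : Matrix (Fin k) (Fin k) ℝ) :
    |(muᵀ * N * mu).trace| ≤ ‖N‖ * (muᵀ * mu).trace := by
  have h1 : (muᵀ * mu).trace = ∑ j, (fun i => mu i j) ⬝ᵥ (fun i => mu i j) := by
    simp [Matrix.trace, Matrix.diag, Matrix.mul_apply, dotProduct]
  rw [trace_col, h1, Finset.mul_sum]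
  refine (Finset.abs_sum_le_sum_abs _ _).trans (Finset.sum_le_sum fun j _ => ?_)
  exact point_ineq N _

theorem stmt_6 {k d : ℕ} (A B : Matrix (Fin k) (Fin k) ℝ)
    (hA : A.PosDef) (hB : B.PosDef)
    (lam : Matrix (Fin k) (Fin d) ℝ) (hlam : lam ≠ 0) :
    |(lamᵀ * (B - A) * lam).trace| ≤
      ‖(1 : Matrix (Fin k) (Fin k) ℝ) -
          (hB.posSemidef.sqrt)⁻¹ * A * (hB.posSemidef.sqrt)⁻¹‖ *
        (lamᵀ * B * lam).trace := by
  set S := hB.posSemidef.sqrt with hSdef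
  have hS : Sᵀ = S := by
    exact sqrt_transpose_real hB.posSemidef
  have hSS : S * S = B := sqrt_mul_self_real hB.posSemidef
  have hdet : IsUnit S.det := by
    have hBdet : B.det ≠ 0 := ne_of_gt hB.det_pos
    have : S.det * S.det = B.det := by rw [← Matrix.det_mul, hSS]
    refine isUnit_iff_ne_zero.mpr fun h => hBdet ?_
    rw [← this, h, mul_zero]
  have hinv1 : S * S⁻¹ = 1 := Matrix.mul_nonsing_inv _ hdet
  have hinv2 : S⁻¹ * S = 1 := Matrix.nonsing_inv_mul _ hdet
  set N : Matrix (Fin k) (Fin k) ℝ := 1 - S⁻¹ * A * S⁻¹ with hN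
  have key : B - A = S * N * S := by
    rw [hN, Matrix.mul_sub, Matrix.sub_mul, Matrix.mul_one, hSS]
    congr 1
    calc A = (S * S⁻¹) * A * (S⁻¹ * S) := by
          rw [hinv1, hinv2, Matrix.one_mul, Matrix.mul_one]
      _ = S * (S⁻¹ * A * S⁻¹) * S := by simp only [Matrix.mul_assoc]
  have e1 : lamᵀ * (B - A) * lam = (S * lam)ᵀ * N * (S * lam) := by
    rw [key, Matrix.transpose_mul, hS]
    simp only [Matrix.mul_assoc]
  have e2 : lamᵀ * B * lam = (S * lam)ᵀ * (S * lam) := by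
    rw [Matrix.transpose_mul, hS, ← hSS]
    simp only [Matrix.mul_assoc]
  rw [e1, e2]
  exact trace_ineq (S * lam) N
end

section
/- Let Σ and Σ̂ be symmetric positive definite k×k matrices, Λ ⊆ ℝ^{k×d} non-empty closed convex not containing 0, λ* = argmin_{λ∈Λ} tr(λᵀΣλ) and λ̂ = argmin_{λ∈Λ} tr(λᵀΣ̂λ). Then tr(λ̂ᵀΣλ̂) − tr(λ*ᵀΣλ*) ≤ tr(λ*ᵀΣλ*)·(2δ + δ²), where δ = δ_Λ(Σ̂, Σ) = max{sup_{λ∈Λ}|1 − tr(λᵀΣ̂λ)/tr(λᵀΣλ)|, sup_{λ∈Λ}|1 − tr(λᵀΣλ)/tr(λᵀΣ̂λ)|}. -/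
open Matrix

/-- `δ_Λ(A|B) = sup_{λ∈Λ} |1 − tr(λᵀAλ)/tr(λᵀBλ)|`. -/
noncomputable def deltaOne {k d : ℕ} (A B : Matrix (Fin k) (Fin k) ℝ)
    (Λ : Set (Matrix (Fin k) (Fin d) ℝ)) : ℝ :=
  sSup ((fun lam => |1 - (lamᵀ * A * lam).trace / (lamᵀ * B * lam).trace|) '' Λ)

/-- `δ_Λ(A,B) = max{δ_Λ(A|B), δ_Λ(B|A)}`. -/
noncomputable def deltaSym {k d : ℕ} (A B : Matrix (Fin k) (Fin k) ℝ)
    (Λ : Set (Matrix (Fin k) (Fin d) ℝ)) : ℝ :=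
  max (deltaOne A B Λ) (deltaOne B A Λ)

lemma trace_quad_pos {k d : ℕ} (P : Matrix (Fin k) (Fin k) ℝ) (hP : P.PosDef)
    (lam : Matrix (Fin k) (Fin d) ℝ) (h : lam ≠ 0) :
    0 < (lamᵀ * P * lam).trace := by
  have hdiag : ∀ j, (lamᵀ * P * lam) j j
      = dotProduct (star (fun i => lam i j)) (P *ᵥ (fun i => lam i j)) := by
    intro j
    simp [Matrix.mul_apply, dotProduct, Matrix.mulVec, Matrix.transpose_apply,
      Finset.mul_sum, mul_comm, mul_left_comm]
    rw [Finset.sum_comm]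
    exact Finset.sum_congr rfl fun y _ => Finset.sum_congr rfl fun x _ => by ring
  have hnonneg : ∀ j ∈ Finset.univ, 0 ≤ (lamᵀ * P * lam) j j := by
    intro j _
    rw [hdiag]
    by_cases hc : (fun i => lam i j) = 0
    · simp [hc]
    · exact le_of_lt (hP.dotProduct_mulVec_pos hc)
  obtain ⟨i, j, hij⟩ : ∃ i j, lam i j ≠ 0 := by
    by_contra hcon
    push_neg at hcon
    exact h (by ext i j; simp [hcon])
  have hcol : (fun i => lam i j) ≠ 0 := fun hc => hij (congrFun hc i)
  have hpos : 0 < (lamᵀ * P * lam) j j := by rw [hdiag]; exact hP.dotProduct_mulVec_pos hcol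
  rw [Matrix.trace]
  exact Finset.sum_pos' hnonneg ⟨j, Finset.mem_univ j, hpos⟩

theorem stmt_11 {k d : ℕ} (S Shat : Matrix (Fin k) (Fin k) ℝ)
    (hS : S.PosDef) (hShat : Shat.PosDef)
    (Λ : Set (Matrix (Fin k) (Fin d) ℝ)) (hne : Λ.Nonempty) (h0 : 0 ∉ Λ)
    (hΛc : IsClosed Λ) (hΛconv : Convex ℝ Λ)
    (hbdd₁ : BddAbove
      ((fun lam => |1 - (lamᵀ * Shat * lam).trace / (lamᵀ * S * lam).trace|) '' Λ))
    (hbdd₂ : BddAbove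
      ((fun lam => |1 - (lamᵀ * S * lam).trace / (lamᵀ * Shat * lam).trace|) '' Λ))
    (lamstar lamhat : Matrix (Fin k) (Fin d) ℝ)
    (hstar : lamstar ∈ Λ)
    (hstarmin : ∀ lam ∈ Λ, (lamstarᵀ * S * lamstar).trace ≤ (lamᵀ * S * lam).trace)
    (hhat : lamhat ∈ Λ)
    (hhatmin : ∀ lam ∈ Λ, (lamhatᵀ * Shat * lamhat).trace ≤ (lamᵀ * Shat * lam).trace) :
    (lamhatᵀ * S * lamhat).trace - (lamstarᵀ * S * lamstar).trace ≤
      (lamstarᵀ * S * lamstar).trace *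
        (2 * deltaSym Shat S Λ + (deltaSym Shat S Λ)^2) := by
  set δ := deltaSym Shat S Λ with hδdef
  have hstar0 : lamstar ≠ 0 := fun h => h0 (h ▸ hstar)
  have hhat0 : lamhat ≠ 0 := fun h => h0 (h ▸ hhat)
  set a := (lamhatᵀ * S * lamhat).trace with ha
  set astar := (lamstarᵀ * S * lamstar).trace with hastar
  set b := (lamhatᵀ * Shat * lamhat).trace with hb
  set bstar := (lamstarᵀ * Shat * lamstar).trace with hbstar
  have hapos : 0 < a := trace_quad_pos S hS lamhat hhat0
  have haspos : 0 < astar := trace_quad_pos S hS lamstar hstar0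
  have hbpos : 0 < b := trace_quad_pos Shat hShat lamhat hhat0
  have hbspos : 0 < bstar := trace_quad_pos Shat hShat lamstar hstar0
  have h1 : |1 - bstar / astar| ≤ δ := by
    have := le_csSup hbdd₁ (Set.mem_image_of_mem _ hstar)
    exact this.trans (le_max_left _ _)
  have h2 : |1 - a / b| ≤ δ := by
    have := le_csSup hbdd₂ (Set.mem_image_of_mem _ hhat)
    exact this.trans (le_max_right _ _)
  have hδ0 : 0 ≤ δ := le_trans (abs_nonneg _) h1
  have hbb : b ≤ bstar := hhatmin lamstar hstar
  have hab : a ≤ (1 + δ) * b := by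
    have h2' : 1 - a / b ≥ -δ := neg_le_of_abs_le h2
    have : a / b ≤ 1 + δ := by linarith
    calc a = (a / b) * b := by field_simp
    _ ≤ (1 + δ) * b := by nlinarith
  have hba : bstar ≤ (1 + δ) * astar := by
    have h1' : 1 - bstar / astar ≥ -δ := neg_le_of_abs_le h1
    have : bstar / astar ≤ 1 + δ := by linarith
    calc bstar = (bstar / astar) * astar := by field_simp
    _ ≤ (1 + δ) * astar := by nlinarith
  nlinarith [mul_le_mul_of_nonneg_left hbb (by linarith : (0:ℝ) ≤ 1 + δ)]
end

section
/- (Theorem 1 pointwise bound) Let θ ∈ ℝ^d, T ∈ ℝ^k, J ∈ ℝ^{k×d}, Σ and Σ̂ symmetric positive definite k×k matrices, and Λ a non-empty closed convex subset of {λ ∈ ℝ^{k×d} : λᵀJ = I_d}. Let λ* minimize tr(λᵀΣλ) over Λ, λ̂ minimize tr(λᵀΣ̂λ) over Λ, θ̂* = λ*ᵀT, θ̂ = λ̂ᵀT, and S = Σ^{−1/2}(T − Jθ). Then ‖θ̂ − θ̂*‖² ≤ (2δ + δ²)·‖S‖²·tr(λ*ᵀΣλ*), where δ = δ_Λ(Σ̂,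 Σ). -/
open Matrix

lemma trace_conj_eq_sum {k d : ℕ} (M : Matrix (Fin k) (Fin k) ℝ)
    (A : Matrix (Fin k) (Fin d) ℝ) :
    (Aᵀ * M * A).trace = ∑ j, (fun i => A i j) ⬝ᵥ M *ᵥ (fun i => A i j) := by
  simp only [Matrix.trace, Matrix.diag, Matrix.mul_apply, Matrix.transpose_apply,
    dotProduct, Matrix.mulVec, Finset.sum_mul, Finset.mul_sum, mul_assoc]
  refine Finset.sum_congr rfl fun j _ => ?_
  rw [Finset.sum_comm]

lemma trace_conj_nonneg {k d : ℕ} {M : Matrix (Fin k) (Fin k) ℝ} (hM : M.PosSemidef)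
    (A : Matrix (Fin k) (Fin d) ℝ) : 0 ≤ (Aᵀ * M * A).trace := by
  rw [trace_conj_eq_sum]
  exact Finset.sum_nonneg fun j _ => by simpa using hM.dotProduct_mulVec_nonneg (fun i => A i j)

lemma trace_conj_pos {k d : ℕ} {M : Matrix (Fin k) (Fin k) ℝ} (hM : M.PosDef)
    {A : Matrix (Fin k) (Fin d) ℝ} (hA : A ≠ 0) : 0 < (Aᵀ * M * A).trace := by
  rw [trace_conj_eq_sum]
  obtain ⟨i, j, hij⟩ : ∃ i j, A i j ≠ 0 := by
    by_contra h; push_neg at h; exact hA (by ext i j; simp [h])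
  refine Finset.sum_pos' (fun j _ => by simpa using hM.posSemidef.dotProduct_mulVec_nonneg (fun i => A i j)) ⟨j, Finset.mem_univ j, ?_⟩
  simpa using hM.dotProduct_mulVec_pos (x := fun i => A i j) (fun h => hij (congrFun h i))

lemma trace_conj_comm {k d : ℕ} (M : Matrix (Fin k) (Fin k) ℝ) (hM : Mᵀ = M)
    (A C : Matrix (Fin k) (Fin d) ℝ) :
    (Cᵀ * M * A).trace = (Aᵀ * M * C).trace := by
  rw [← Matrix.trace_transpose (Cᵀ * M * A)]
  simp [Matrix.transpose_mul, hM, Matrix.mul_assoc]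

lemma trace_conj_add {k d : ℕ} (M : Matrix (Fin k) (Fin k) ℝ) (hM : Mᵀ = M)
    (A C : Matrix (Fin k) (Fin d) ℝ) :
    ((A + C)ᵀ * M * (A + C)).trace =
      (Aᵀ * M * A).trace + 2 * (Aᵀ * M * C).trace + (Cᵀ * M * C).trace := by
  simp only [Matrix.transpose_add, Matrix.add_mul, Matrix.mul_add, Matrix.trace_add]
  rw [trace_conj_comm M hM A C]
  ring

lemma trace_conj_smul_right {k d : ℕ} (M : Matrix (Fin k) (Fin k) ℝ) (t : ℝ)
    (A C : Matrix (Fin k) (Fin d) ℝ) :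
    (Aᵀ * M * (t • C)).trace = t * (Aᵀ * M * C).trace := by
  rw [Matrix.mul_smul, Matrix.trace_smul]; rfl

lemma trace_conj_smul {k d : ℕ} (M : Matrix (Fin k) (Fin k) ℝ) (t : ℝ)
    (C : Matrix (Fin k) (Fin d) ℝ) :
    ((t • C)ᵀ * M * (t • C)).trace = t ^ 2 * (Cᵀ * M * C).trace := by
  rw [Matrix.transpose_smul, Matrix.smul_mul, Matrix.smul_mul, Matrix.mul_smul,
    Matrix.trace_smul, Matrix.trace_smul]
  simp [smul_smul, sq]
  ring

lemma trace_transpose_mul_self {k d : ℕ} (C : Matrix (Fin k) (Fin d) ℝ) :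
    (Cᵀ * C).trace = ∑ j, ∑ i, (C i j)^2 := by
  simp [Matrix.trace, Matrix.mul_apply, sq]

/-- First-order optimality condition for minimizing `tr(λᵀMλ)` over a convex set. -/
lemma opt_bilinear_nonneg {k d : ℕ} {M : Matrix (Fin k) (Fin k) ℝ} (hM : M.PosDef)
    {Λ : Set (Matrix (Fin k) (Fin d) ℝ)} (hconv : Convex ℝ Λ)
    {A B : Matrix (Fin k) (Fin d) ℝ} (hA : A ∈ Λ) (hB : B ∈ Λ)
    (hmin : ∀ lam ∈ Λ, (Aᵀ * M * A).trace ≤ (lamᵀ * M * lam).trace) :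
    0 ≤ (Aᵀ * M * (B - A)).trace := by
  by_contra hneg
  push_neg at hneg
  set D := B - A with hD
  set b := (Aᵀ * M * D).trace with hb
  have hDne : D ≠ 0 := by
    intro h0
    rw [hb, h0, Matrix.mul_zero, Matrix.trace_zero] at hneg
    exact lt_irrefl _ hneg
  have hQD : 0 < (Dᵀ * M * D).trace := trace_conj_pos hM hDne
  set t := min 1 (-b / (Dᵀ * M * D).trace) with htdef
  have ht0 : 0 < t := lt_min one_pos (div_pos (neg_pos.2 hneg) hQD)
  have ht1 : t ≤ 1 := min_le_left _ _
  have htb : t * (Dᵀ * M * D).trace ≤ -b := by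
    have := min_le_right 1 (-b / (Dᵀ * M * D).trace)
    calc t * (Dᵀ * M * D).trace ≤ (-b / (Dᵀ * M * D).trace) * (Dᵀ * M * D).trace :=
          mul_le_mul_of_nonneg_right this hQD.le
      _ = -b := div_mul_cancel₀ _ hQD.ne'
  have hmem : A + t • D ∈ Λ := by
    have h := hconv hA hB (sub_nonneg.mpr ht1) ht0.le (by ring)
    have : (1 - t) • A + t • B = A + t • D := by
      rw [hD, smul_sub, sub_smul, one_smul]; abel
    rwa [this] at h
  have hle := hmin _ hmem
  rw [trace_conj_add M hM.1 A (t • D), trace_conj_smul_right, trace_conj_smul] at hle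
  nlinarith [hle, ht0, htb]

theorem stmt_12 {k d : ℕ} (θ : Fin d → ℝ) (T : Fin k → ℝ)
    (J : Matrix (Fin k) (Fin d) ℝ)
    (S Shat : Matrix (Fin k) (Fin k) ℝ) (hS : S.PosDef) (hShat : Shat.PosDef)
    (Λ : Set (Matrix (Fin k) (Fin d) ℝ)) (hne : Λ.Nonempty)
    (hΛc : IsClosed Λ) (hΛconv : Convex ℝ Λ)
    (hΛsub : Λ ⊆ {lam | lamᵀ * J = 1})
    (hbdd₁ : BddAbove
      ((fun lam => |1 - (lamᵀ * Shat * lam).trace / (lamᵀ * S * lam).trace|) '' Λ))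
    (hbdd₂ : BddAbove
      ((fun lam => |1 - (lamᵀ * S * lam).trace / (lamᵀ * Shat * lam).trace|) '' Λ))
    (lamstar lamhat : Matrix (Fin k) (Fin d) ℝ)
    (hstar : lamstar ∈ Λ)
    (hstarmin : ∀ lam ∈ Λ, (lamstarᵀ * S * lamstar).trace ≤ (lamᵀ * S * lam).trace)
    (hhat : lamhat ∈ Λ)
    (hhatmin : ∀ lam ∈ Λ, (lamhatᵀ * Shat * lamhat).trace ≤ (lamᵀ * Shat * lam).trace) :
    ∑ j, (lamhatᵀ.mulVec T j - lamstarᵀ.mulVec T j)^2 ≤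
      (2 * deltaSym Shat S Λ + (deltaSym Shat S Λ)^2) *
        (∑ i, ((hS.posSemidef.1.eigenvectorUnitary.1 * diagonal (((↑) : ℝ → ℝ) ∘ Real.sqrt ∘ hS.posSemidef.1.eigenvalues) *
            (star hS.posSemidef.1.eigenvectorUnitary : Matrix (Fin k) (Fin k) ℝ))⁻¹.mulVec (fun i' => T i' - J.mulVec θ i') i)^2) *
        (lamstarᵀ * S * lamstar).trace := by
  set δ := deltaSym Shat S Λ with hδdef
  have hmem₁ : ∀ lam ∈ Λ,
      |1 - (lamᵀ * Shat * lam).trace / (lamᵀ * S * lam).trace| ≤ δ :=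
    fun lam h => le_trans (le_csSup hbdd₁ ⟨lam, h, rfl⟩) (le_max_left _ _)
  have hmem₂ : ∀ lam ∈ Λ,
      |1 - (lamᵀ * S * lam).trace / (lamᵀ * Shat * lam).trace| ≤ δ :=
    fun lam h => le_trans (le_csSup hbdd₂ ⟨lam, h, rfl⟩) (le_max_right _ _)
  have hδ0 : 0 ≤ δ := le_trans (abs_nonneg _) (hmem₁ lamstar hstar)
  set W := ∑ i, ((hS.posSemidef.1.eigenvectorUnitary.1 * diagonal (((↑) : ℝ → ℝ) ∘ Real.sqrt ∘ hS.posSemidef.1.eigenvalues) *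
            (star hS.posSemidef.1.eigenvectorUnitary : Matrix (Fin k) (Fin k) ℝ))⁻¹.mulVec (fun i' => T i' - J.mulVec θ i') i)^2 with hWdef
  have hW0 : 0 ≤ W := Finset.sum_nonneg fun i _ => sq_nonneg _
  have hQstar0 : 0 ≤ (lamstarᵀ * S * lamstar).trace := trace_conj_nonneg hS.posSemidef _
  rcases Nat.eq_zero_or_pos d with hd | hd
  · subst hd
    simp only [Finset.univ_eq_empty, Finset.sum_empty]
    have h2δ : 0 ≤ 2 * δ + δ ^ 2 := by positivity
    exact mul_nonneg (mul_nonneg h2δ hW0) hQstar0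
  -- main case: d ≥ 1
  have hne0 : ∀ lam ∈ Λ, lam ≠ 0 := by
    intro lam h h0
    have h1 := hΛsub h
    simp only [Set.mem_setOf_eq, h0, Matrix.transpose_zero, Matrix.zero_mul] at h1
    have := congrFun (congrFun h1 ⟨0, hd⟩) ⟨0, hd⟩
    simp at this
  have hQs_hat : 0 < (lamhatᵀ * S * lamhat).trace := trace_conj_pos hS (hne0 _ hhat)
  have hQh_hat : 0 < (lamhatᵀ * Shat * lamhat).trace := trace_conj_pos hShat (hne0 _ hhat)
  have hQs_star : 0 < (lamstarᵀ * S * lamstar).trace := trace_conj_pos hS (hne0 _ hstar)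
  -- step 1: tr(λ̂ᵀ S λ̂) ≤ (1+δ)² tr(λ*ᵀ S λ*)
  have h1 : (lamhatᵀ * S * lamhat).trace ≤
      (1 + δ) * (lamhatᵀ * Shat * lamhat).trace := by
    have h := (abs_le.mp (hmem₂ lamhat hhat)).1
    have : (lamhatᵀ * S * lamhat).trace / (lamhatᵀ * Shat * lamhat).trace ≤ 1 + δ := by
      linarith
    calc (lamhatᵀ * S * lamhat).trace
        = ((lamhatᵀ * S * lamhat).trace / (lamhatᵀ * Shat * lamhat).trace) *
            (lamhatᵀ * Shat * lamhat).trace := by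
          field_simp
      _ ≤ (1 + δ) * (lamhatᵀ * Shat * lamhat).trace :=
          mul_le_mul_of_nonneg_right this hQh_hat.le
  have h2 : (lamhatᵀ * Shat * lamhat).trace ≤ (lamstarᵀ * Shat * lamstar).trace :=
    hhatmin lamstar hstar
  have h3 : (lamstarᵀ * Shat * lamstar).trace ≤
      (1 + δ) * (lamstarᵀ * S * lamstar).trace := by
    have h := (abs_le.mp (hmem₁ lamstar hstar)).1
    have : (lamstarᵀ * Shat * lamstar).trace / (lamstarᵀ * S * lamstar).trace ≤ 1 + δ := by
      linarith
    calc (lamstarᵀ * Shat * lamstar).trace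
        = ((lamstarᵀ * Shat * lamstar).trace / (lamstarᵀ * S * lamstar).trace) *
            (lamstarᵀ * S * lamstar).trace := by field_simp
      _ ≤ (1 + δ) * (lamstarᵀ * S * lamstar).trace :=
          mul_le_mul_of_nonneg_right this hQs_star.le
  have hchain : (lamhatᵀ * S * lamhat).trace ≤
      (1 + δ) ^ 2 * (lamstarᵀ * S * lamstar).trace := by
    nlinarith [h1, h2, h3, hδ0, hQh_hat]
  -- step 2: first-order optimality
  set D := lamhat - lamstar with hDdef
  have hopt : 0 ≤ (lamstarᵀ * S * D).trace :=
    opt_bilinear_nonneg hS hΛconv hstar hhat hstarmin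
  have hexp : (lamhatᵀ * S * lamhat).trace =
      (lamstarᵀ * S * lamstar).trace + 2 * (lamstarᵀ * S * D).trace +
        (Dᵀ * S * D).trace := by
    have h := trace_conj_add S hS.1 lamstar D
    rw [hDdef] at h ⊢
    simpa using h
  have hQD : (Dᵀ * S * D).trace ≤ (2 * δ + δ ^ 2) * (lamstarᵀ * S * lamstar).trace := by
    nlinarith [hchain, hexp, hopt]
  -- step 3: Cauchy–Schwarz
  set R := hS.posSemidef.1.eigenvectorUnitary.1 * diagonal (((↑) : ℝ → ℝ) ∘ Real.sqrt ∘ hS.posSemidef.1.eigenvalues) *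
            (star hS.posSemidef.1.eigenvectorUnitary : Matrix (Fin k) (Fin k) ℝ) with hRdef
  have hRsym : Rᵀ = R := by
    rw [hRdef]
    simp [Matrix.transpose_mul, Matrix.star_eq_conjTranspose,
      Matrix.conjTranspose_eq_transpose_of_trivial, Matrix.mul_assoc]
  have hRR : R * R = S := by
    have hU : (star hS.posSemidef.1.eigenvectorUnitary : Matrix (Fin k) (Fin k) ℝ) *
        hS.posSemidef.1.eigenvectorUnitary.1 = 1 := hS.posSemidef.1.eigenvectorUnitary.2.1
    have hD : diagonal (((↑) : ℝ → ℝ) ∘ Real.sqrt ∘ hS.posSemidef.1.eigenvalues) *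
        diagonal (((↑) : ℝ → ℝ) ∘ Real.sqrt ∘ hS.posSemidef.1.eigenvalues) =
        diagonal (RCLike.ofReal ∘ hS.posSemidef.1.eigenvalues) := by
      rw [Matrix.diagonal_mul_diagonal]
      congr 1; funext i
      simp [Real.mul_self_sqrt (hS.posSemidef.eigenvalues_nonneg i)]
    have hspec := hS.posSemidef.1.spectral_theorem
    rw [Unitary.conjStarAlgAut_apply] at hspec
    rw [hRdef]
    calc _ = hS.posSemidef.1.eigenvectorUnitary.1 *
          (diagonal (((↑) : ℝ → ℝ) ∘ Real.sqrt ∘ hS.posSemidef.1.eigenvalues) *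
          ((star hS.posSemidef.1.eigenvectorUnitary : Matrix (Fin k) (Fin k) ℝ) *
        hS.posSemidef.1.eigenvectorUnitary.1) *
          diagonal (((↑) : ℝ → ℝ) ∘ Real.sqrt ∘ hS.posSemidef.1.eigenvalues)) *
          (star hS.posSemidef.1.eigenvectorUnitary : Matrix (Fin k) (Fin k) ℝ) := by
            simp only [Matrix.mul_assoc]
      _ = S := by
        rw [hU, Matrix.mul_one, hD]
        exact hspec.symm
  have hRunit : IsUnit R.det := by
    have hdet : R.det * R.det = S.det := by rw [← Matrix.det_mul, hRR]
    have := hS.det_pos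
    refine isUnit_iff_ne_zero.mpr fun h0 => ?_
    rw [h0, mul_zero] at hdet; linarith
  set v : Fin k → ℝ := fun i' => T i' - J.mulVec θ i' with hvdef
  set w : Fin k → ℝ := R⁻¹.mulVec v with hwdef
  have hRw : R.mulVec w = v := by
    rw [hwdef, Matrix.mulVec_mulVec, Matrix.mul_nonsing_inv _ hRunit, Matrix.one_mulVec]
  have hDJ : Dᵀ * J = 0 := by
    have h1 := hΛsub hhat
    have h2 := hΛsub hstar
    rw [hDdef, Matrix.transpose_sub, Matrix.sub_mul, h1, h2, sub_self]
  have hkey : ∀ j, lamhatᵀ.mulVec T j - lamstarᵀ.mulVec T j = (Dᵀ * R).mulVec w j := by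
    intro j
    have hTv : T = v + J.mulVec θ := by
      funext i'; simp [hvdef]
    have : Dᵀ.mulVec T = (Dᵀ * R).mulVec w := by
      rw [hTv, Matrix.mulVec_add, ← hRw, Matrix.mulVec_mulVec, Matrix.mulVec_mulVec,
        Matrix.mulVec_mulVec, hDJ, Matrix.zero_mulVec, add_zero]
    calc lamhatᵀ.mulVec T j - lamstarᵀ.mulVec T j = Dᵀ.mulVec T j := by
          rw [hDdef, Matrix.transpose_sub, Matrix.sub_mulVec]; simp
      _ = (Dᵀ * R).mulVec w j := by rw [this]
  have hCS : ∑ j, (lamhatᵀ.mulVec T j - lamstarᵀ.mulVec T j)^2 ≤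
      (Dᵀ * S * D).trace * W := by
    have hFrob : ∑ j, ∑ i, ((Dᵀ * R) j i)^2 = (Dᵀ * S * D).trace := by
      have h : Dᵀ * S * D = (R * D)ᵀ * (R * D) := by
        rw [Matrix.transpose_mul, hRsym, ← hRR]
        simp only [Matrix.mul_assoc]
      rw [h, trace_transpose_mul_self]
      refine Finset.sum_congr rfl fun j _ => Finset.sum_congr rfl fun i _ => ?_
      congr 1
      calc (Dᵀ * R) j i = (Dᵀ * R)ᵀ i j := rfl
        _ = (R * D) i j := by rw [Matrix.transpose_mul, hRsym, Matrix.transpose_transpose]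
    calc ∑ j, (lamhatᵀ.mulVec T j - lamstarᵀ.mulVec T j)^2
        = ∑ j, ((Dᵀ * R).mulVec w j)^2 := by
          refine Finset.sum_congr rfl fun j _ => ?_; rw [hkey j]
      _ ≤ ∑ j, (∑ i, ((Dᵀ * R) j i)^2) * (∑ i, (w i)^2) := by
          refine Finset.sum_le_sum fun j _ => ?_
          have hmv : ((Dᵀ * R) *ᵥ w) j = ∑ i, (Dᵀ * R) j i * w i := rfl
          rw [hmv]
          exact Finset.sum_mul_sq_le_sq_mul_sq _ _ _
      _ = (Dᵀ * S * D).trace * W := by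
          rw [← Finset.sum_mul, hFrob, ← hWdef]
  calc ∑ j, (lamhatᵀ.mulVec T j - lamstarᵀ.mulVec T j)^2
      ≤ (Dᵀ * S * D).trace * W := hCS
    _ ≤ ((2 * δ + δ ^ 2) * (lamstarᵀ * S * lamstar).trace) * W :=
        mul_le_mul_of_nonneg_right hQD hW0
    _ = (2 * δ + δ ^ 2) * W * (lamstarᵀ * S * lamstar).trace := by ring
end
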